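/- Let G = ⟨a⟩ × ⟨b⟩ be free abelian of rank two and A a Schur ring over G with ⟨a⟩ an A-subgroup. If D is the basic set of A containing b, then D is one of: {b}; {b, b^{-1}}; {b a^{i_0}, b} for some nonzero integer i_0; {b^{-1} a^{i_1}, b} for some nonzero integer i_1; or {b, b a^{i_2}, b^{-1}, b^{-1} a^{-i_2}} for some nonzero integer i_2. -/

import Mathlib

open Finset MonoidAlgebra

set_option linter.unusedSectionVars false

noncomputable def simpleQuantity (F : Type*) [Field F] {G : Type*} [Group G]
    (D : Finset G) : MonoidAlgebra F G :=
  ∑ g ∈ D, MonoidAlgebra.single g 1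

structure SchurRing (F G : Type*) [Field F] [Group G] where
  parts : Set (Finset G)
  parts_nonempty : ∀ D ∈ parts, D.Nonempty
  cover : ∀ g : G, ∃ D ∈ parts, g ∈ D
  eq_of_mem : ∀ D₁ ∈ parts, ∀ D₂ ∈ parts, ∀ g : G, g ∈ D₁ → g ∈ D₂ → D₁ = D₂
  one_mem : ({1} : Finset G) ∈ parts
  inv_mem : ∀ D ∈ parts, ∃ D' ∈ parts, ∀ g : G, g ∈ D' ↔ g⁻¹ ∈ D
  mul_mem : ∀ x ∈ Submodule.span F (simpleQuantity F '' parts),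
    ∀ y ∈ Submodule.span F (simpleQuantity F '' parts),
    x * y ∈ Submodule.span F (simpleQuantity F '' parts)

noncomputable def SchurRing.span {F G : Type*} [Field F] [Group G] (A : SchurRing F G) :
    Submodule F (MonoidAlgebra F G) :=
  Submodule.span F (simpleQuantity F '' A.parts)

def SchurRing.IsASet {F G : Type*} [Field F] [Group G] (A : SchurRing F G)
    (S : Set G) : Prop :=
  ∀ D ∈ A.parts, (∃ g ∈ D, g ∈ S) → ↑D ⊆ S

/-- The free abelian group of rank two, written multiplicatively. -/
abbrev Z2 := Multiplicative (ℤ × ℤ)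

/-- The first generator `a` of `Z × Z`. -/
def ga : Z2 := Multiplicative.ofAdd (1, 0)

/-- The second generator `b` of `Z × Z`. -/
def gb : Z2 := Multiplicative.ofAdd (0, 1)

noncomputable def sigmaR (R : Type*) [Semiring R] {G : Type*} [Group G] (C : Finset G) :
    MonoidAlgebra R G :=
  ∑ c ∈ C, MonoidAlgebra.single c 1


section Generic
variable {G : Type*} [CommGroup G] [DecidableEq G]
variable {R : Type*} [CommSemiring R]


lemma sigmaR_apply (C : Finset G) (g : G) :
    (sigmaR R C).coeff g = if g ∈ C then 1 else 0 := by
  rw [sigmaR, MonoidAlgebra.coeff_sum, Finsupp.finset_sum_apply]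
  simp [MonoidAlgebra.coeff_single, Finsupp.single_apply]

lemma sigmaR_mul_apply (C D : Finset G) (g : G) :
    (sigmaR R C * sigmaR R D).coeff g
      = (((C ×ˢ D).filter fun p => p.1 * p.2 = g).card : R) := by
  rw [sigmaR, sigmaR, Finset.sum_mul_sum]
  rw [← Finset.sum_product' (f := fun c d => (single c (1:R)) * single d 1)]
  simp only [MonoidAlgebra.single_mul_single, one_mul]
  rw [MonoidAlgebra.coeff_sum, Finsupp.finset_sum_apply]
  rw [← Finset.sum_boole]
  exact Finset.sum_congr rfl fun p _ => by simp [MonoidAlgebra.coeff_single, Finsupp.single_apply, eq_comm]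

def tupleCount (C : Finset G) (n : ℕ) (g : G) : ℕ :=
  ((Fintype.piFinset fun _ : Fin n => C).filter fun v => ∏ i, v i = g).card

lemma sigmaR_pow (C : Finset G) (n : ℕ) :
    (sigmaR R C) ^ n = ∑ v ∈ Fintype.piFinset (fun _ : Fin n => C),
      MonoidAlgebra.single (∏ i, v i) 1 := by
  have h := Finset.prod_univ_sum (fun _ : Fin n => C)
      (fun _ c => (MonoidAlgebra.of R G c : MonoidAlgebra R G))
  simp only [Finset.prod_const, Finset.card_univ, Fintype.card_fin] at h
  rw [sigmaR]
  calc (∑ c ∈ C, MonoidAlgebra.single c (1:R)) ^ n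
      = (∑ c ∈ C, (MonoidAlgebra.of R G c : MonoidAlgebra R G)) ^ n := by rfl
    _ = ∑ v ∈ Fintype.piFinset (fun _ : Fin n => C), ∏ i, (of R G (v i) : MonoidAlgebra R G) := h
    _ = _ := by
        refine Finset.sum_congr rfl fun v _ => ?_
        rw [← map_prod (of R G)]
        rfl

lemma sigmaR_pow_apply (C : Finset G) (n : ℕ) (g : G) :
    ((sigmaR R C) ^ n).coeff g = (tupleCount C n g : R) := by
  rw [sigmaR_pow, MonoidAlgebra.coeff_sum, Finsupp.finset_sum_apply, tupleCount, ← Finset.sum_boole]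
  exact Finset.sum_congr rfl fun v _ => by simp [MonoidAlgebra.coeff_single, Finsupp.single_apply, eq_comm]


lemma monoidAlgebra_charP (R : Type*) [Semiring R] (p : ℕ) [CharP R p] :
    CharP (MonoidAlgebra R G) p := by
  constructor
  intro n
  rw [MonoidAlgebra.natCast_def]
  rw [← CharP.cast_eq_zero_iff R p n]
  constructor
  · intro h
    have := MonoidAlgebra.single_eq_zero.mp h
    exact this
  · intro h; rw [h]; exact MonoidAlgebra.single_zero _

lemma sigmaR_pow_p_apply (p : ℕ) [Fact p.Prime] (C : Finset G) (g : G) :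
    ((sigmaR (ZMod p) C) ^ p).coeff g = ((C.filter fun c => c ^ p = g).card : ZMod p) := by
  haveI : CharP (MonoidAlgebra (ZMod p) G) p := monoidAlgebra_charP _ _
  haveI : ExpChar (MonoidAlgebra (ZMod p) G) p := ExpChar.prime (Fact.out)
  rw [sigmaR, sum_pow_char]
  have : ∀ c : G, (MonoidAlgebra.single c (1 : ZMod p)) ^ p = MonoidAlgebra.single (c ^ p) 1 := by
    intro c
    rw [MonoidAlgebra.single_pow, one_pow]
  simp only [this]
  rw [MonoidAlgebra.coeff_sum, Finsupp.finset_sum_apply, ← Finset.sum_boole]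
  exact Finset.sum_congr rfl fun v _ => by simp [MonoidAlgebra.coeff_single, Finsupp.single_apply, eq_comm]

end Generic

section SR
variable {F G : Type*} [Field F] [CharZero F] [CommGroup G] [DecidableEq G]
variable (A : SchurRing F G)

lemma simpleQuantity_eq (C : Finset G) : simpleQuantity F C = sigmaR F C := rfl

noncomputable def SchurRing.partOf (g : G) : Finset G := (A.cover g).choose

lemma SchurRing.partOf_mem (g : G) : A.partOf g ∈ A.parts := (A.cover g).choose_spec.1

lemma SchurRing.mem_partOf (g : G) : g ∈ A.partOf g := (A.cover g).choose_spec.2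

lemma SchurRing.partOf_eq {C : Finset G} (hC : C ∈ A.parts) {g : G} (hg : g ∈ C) :
    A.partOf g = C :=
  A.eq_of_mem _ (A.partOf_mem g) _ hC g (A.mem_partOf g) hg

lemma SchurRing.partOf_one : A.partOf (1 : G) = {1} :=
  A.partOf_eq A.one_mem (Finset.mem_singleton_self 1)

lemma SchurRing.sigma_mem {C : Finset G} (hC : C ∈ A.parts) : sigmaR F C ∈ A.span :=
  Submodule.subset_span ⟨C, hC, rfl⟩

lemma SchurRing.coeff_const {x : MonoidAlgebra F G} (hx : x ∈ A.span)
    {C : Finset G} (hC : C ∈ A.parts) {g h : G} (hg : g ∈ C) (hh : h ∈ C) :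
    x.coeff g = x.coeff h := by
  induction hx using Submodule.span_induction with
  | mem y hy =>
    obtain ⟨C', hC', rfl⟩ := hy
    rw [simpleQuantity_eq]
    rw [show ((sigmaR F C').coeff g = if g ∈ C' then 1 else 0) from by
      rw [sigmaR, MonoidAlgebra.coeff_sum, Finsupp.finset_sum_apply]; simp [MonoidAlgebra.coeff_single, Finsupp.single_apply]]
    rw [show ((sigmaR F C').coeff h = if h ∈ C' then 1 else 0) from by
      rw [sigmaR, MonoidAlgebra.coeff_sum, Finsupp.finset_sum_apply]; simp [MonoidAlgebra.coeff_single, Finsupp.single_apply]]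
    congr 1
    simp only [eq_iff_iff]
    constructor
    · intro hgC'; rw [A.eq_of_mem _ hC _ hC' g hg hgC'] at hh; exact hh
    · intro hhC'; rw [A.eq_of_mem _ hC _ hC' h hh hhC'] at hg; exact hg
  | zero => rfl
  | add y z _ _ h1 h2 =>
    rw [MonoidAlgebra.coeff_add, Finsupp.add_apply, Finsupp.add_apply, h1, h2]
  | smul a y _ h1 =>
    rw [MonoidAlgebra.coeff_smul_apply, MonoidAlgebra.coeff_smul_apply, h1]

end SR

def countN {G : Type*} [Group G] [DecidableEq G] (C D : Finset G) (g : G) : ℕ :=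
  ((C ×ˢ D).filter fun p => p.1 * p.2 = g).card

section SR2
variable {F G : Type*} [Field F] [CharZero F] [CommGroup G] [DecidableEq G]
variable (A : SchurRing F G)

lemma SchurRing.count_const {C D P : Finset G} (hC : C ∈ A.parts) (hD : D ∈ A.parts)
    (hP : P ∈ A.parts) {y z : G} (hy : y ∈ P) (hz : z ∈ P) :
    countN C D y = countN C D z := by
  have hx : sigmaR F C * sigmaR F D ∈ A.span :=
    A.mul_mem _ (A.sigma_mem hC) _ (A.sigma_mem hD)
  have := A.coeff_const hx hP hy hz
  rw [sigmaR_mul_apply, sigmaR_mul_apply] at this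
  exact_mod_cast this

lemma SchurRing.one_mem_span : (1 : MonoidAlgebra F G) ∈ A.span := by
  have : (1 : MonoidAlgebra F G) = sigmaR F ({1} : Finset G) := by
    rw [sigmaR, Finset.sum_singleton]; rfl
  rw [this]
  exact A.sigma_mem A.one_mem

lemma SchurRing.sigma_pow_mem {C : Finset G} (hC : C ∈ A.parts) (n : ℕ) :
    (sigmaR F C) ^ n ∈ A.span := by
  induction n with
  | zero => rw [pow_zero]; exact A.one_mem_span
  | succ n ih => rw [pow_succ]; exact A.mul_mem _ ih _ (A.sigma_mem hC)

lemma SchurRing.tuple_const {C P : Finset G} (hC : C ∈ A.parts)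
    (hP : P ∈ A.parts) (n : ℕ) {y z : G} (hy : y ∈ P) (hz : z ∈ P) :
    tupleCount C n y = tupleCount C n z := by
  have := A.coeff_const (A.sigma_pow_mem hC n) hP hy hz
  rw [sigmaR_pow_apply, sigmaR_pow_apply] at this
  exact_mod_cast this

lemma tupleCount_cast_zmod (p : ℕ) [Fact p.Prime] (C : Finset G) (g : G) :
    (tupleCount C p g : ZMod p) = ((C.filter fun c => c ^ p = g).card : ZMod p) := by
  rw [← sigmaR_pow_apply (R := ZMod p), sigmaR_pow_p_apply]

lemma SchurRing.frobenius_part (p : ℕ) [hp : Fact p.Prime]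
    (hinj : Function.Injective fun g : G => g ^ p)
    {C : Finset G} (hC : C ∈ A.parts) :
    A.IsASet ((fun g : G => g ^ p) '' ↑C) := by
  intro Dp hDp hex d hd
  obtain ⟨g, hgDp, hgIm⟩ := hex
  rw [Finset.mem_coe] at hd
  have hcard : ∀ x : G, (C.filter fun c => c ^ p = x).card ≤ 1 := by
    intro x
    apply Finset.card_le_one.mpr
    intro u hu v hv
    rw [Finset.mem_filter] at hu hv
    exact hinj (hu.2.trans hv.2.symm)
  have hg1 : (C.filter fun c => c ^ p = g).card = 1 := by
    obtain ⟨c, hcC, hcg⟩ := hgIm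
    refine le_antisymm (hcard g) ?_
    refine Finset.card_pos.mpr ⟨c, Finset.mem_filter.mpr ⟨hcC, hcg⟩⟩
  have heq := A.tuple_const hC hDp p hgDp hd
  have hz : ((C.filter fun c => c ^ p = g).card : ZMod p)
      = ((C.filter fun c => c ^ p = d).card : ZMod p) := by
    rw [← tupleCount_cast_zmod, ← tupleCount_cast_zmod, heq]
  rw [hg1] at hz
  have hd1 : (C.filter fun c => c ^ p = d).card = 1 := by
    rcases Nat.le_one_iff_eq_zero_or_eq_one.mp (hcard d) with h0 | h1
    · rw [h0] at hz
      simp only [Nat.cast_one, Nat.cast_zero] at hz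
      exact absurd hz one_ne_zero
    · exact h1
  obtain ⟨c, hc⟩ := Finset.card_eq_one.mp hd1
  have : c ∈ C.filter fun c => c ^ p = d := by rw [hc]; exact Finset.mem_singleton_self c
  rw [Finset.mem_filter] at this
  exact ⟨c, this.1, this.2⟩

end SR2
section SR3
variable {F G : Type*} [Field F] [CharZero F] [CommGroup G] [DecidableEq G]
variable (A : SchurRing F G)

lemma SchurRing.part_isASet {C : Finset G} (hC : C ∈ A.parts) : A.IsASet ↑C := by
  intro D' hD' ⟨g, hg, hgC⟩
  rw [A.eq_of_mem _ hD' _ hC g hg (Finset.mem_coe.mp hgC)]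

lemma SchurRing.isASet_inv {S : Set G} (hS : A.IsASet S) :
    A.IsASet (Inv.inv '' S) := by
  intro D' hD' ⟨g, hgD', hgIm⟩ d hd
  obtain ⟨s, hsS, rfl⟩ := hgIm
  obtain ⟨D'', hD'', hiff⟩ := A.inv_mem _ hD'
  have hsmem : s ∈ D'' := (hiff s).mpr hgD'
  have hsub : ↑D'' ⊆ S := hS _ hD'' ⟨s, hsmem, hsS⟩
  rw [Finset.mem_coe] at hd
  have : d⁻¹ ∈ D'' := (hiff d⁻¹).mpr (by rwa [inv_inv])
  exact ⟨d⁻¹, hsub this, inv_inv d⟩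

lemma SchurRing.isASet_pow_prime (p : ℕ) [hp : Fact p.Prime]
    (hinj : Function.Injective fun g : G => g ^ p)
    {S : Set G} (hS : A.IsASet S) : A.IsASet ((fun g : G => g ^ p) '' S) := by
  intro D' hD' ⟨g, hgD', hgIm⟩
  obtain ⟨s, hsS, rfl⟩ := hgIm
  have hC := A.partOf_mem s
  have hCsub : ↑(A.partOf s) ⊆ S := hS _ hC ⟨s, A.mem_partOf s, hsS⟩
  have := A.frobenius_part p hinj hC _ hD' ⟨s ^ p, hgD', ⟨s, A.mem_partOf s, rfl⟩⟩
  exact this.trans (Set.image_mono hCsub)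

lemma SchurRing.isASet_pow (hinj : ∀ m : ℕ, m ≠ 0 → Function.Injective fun g : G => g ^ m)
    (n : ℕ) (hn : n ≠ 0) {S : Set G} (hS : A.IsASet S) :
    A.IsASet ((fun g : G => g ^ n) '' S) := by
  induction n using Nat.strong_induction_on with
  | _ n ih =>
  rcases eq_or_ne n 1 with rfl | hn1
  · simpa using hS
  have hp : n.minFac.Prime := Nat.minFac_prime hn1
  haveI : Fact n.minFac.Prime := ⟨hp⟩
  set m := n / n.minFac with hm
  have hdvd : n.minFac ∣ n := Nat.minFac_dvd n
  have hnm : n = m * n.minFac := (Nat.div_mul_cancel hdvd).symm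
  have hm0 : m ≠ 0 := by
    intro h; rw [h, zero_mul] at hnm; exact hn hnm
  have hmlt : m < n := Nat.div_lt_self (Nat.pos_of_ne_zero hn) hp.two_le
  have himg : (fun g : G => g ^ n) '' S
      = (fun g : G => g ^ n.minFac) '' ((fun g : G => g ^ m) '' S) := by
    rw [Set.image_image]
    apply Set.image_congr'
    intro x
    rw [← pow_mul, ← hnm]
  rw [himg]
  exact A.isASet_pow_prime _ (hinj _ (Nat.Prime.ne_zero hp)) (ih m hmlt hm0)

lemma SchurRing.isASet_zpow (hinj : ∀ m : ℕ, m ≠ 0 → Function.Injective fun g : G => g ^ m)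
    (k : ℤ) (hk : k ≠ 0) {S : Set G} (hS : A.IsASet S) :
    A.IsASet ((fun g : G => g ^ k) '' S) := by
  have hnat : A.IsASet ((fun g : G => g ^ (k.natAbs)) '' S) :=
    A.isASet_pow hinj _ (by simpa using hk) hS
  rcases Int.natAbs_eq k with h | h
  · have : (fun g : G => g ^ k) '' S = (fun g : G => g ^ (k.natAbs)) '' S := by
      apply Set.image_congr'
      intro x; rw [← zpow_natCast, ← h]
    rwa [this]
  · have : (fun g : G => g ^ k) '' S = Inv.inv '' ((fun g : G => g ^ (k.natAbs)) '' S) := by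
      rw [Set.image_image]
      apply Set.image_congr'
      intro x
      rw [← zpow_natCast, ← zpow_neg, ← h]
    rw [this]
    exact A.isASet_inv hnat

end SR3
section CountHelpers
variable {G : Type*} [CommGroup G] [DecidableEq G]

lemma sum_ind_eq (D : Finset G) (u d : G) :
    (∑ z ∈ D, if u * z = d then (1:ℕ) else 0) = if u⁻¹ * d ∈ D then 1 else 0 := by
  rw [Finset.sum_congr rfl (fun z _ => if_congr
    (show (u * z = d) ↔ (z = u⁻¹ * d) by rw [eq_inv_mul_iff_mul_eq]) rfl rfl)]
  rw [Finset.sum_ite_eq' D (u⁻¹ * d) (fun _ => (1:ℕ))]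

lemma countN_singleton (u : G) (D : Finset G) (d : G) :
    countN {u} D d = if u⁻¹ * d ∈ D then 1 else 0 := by
  rw [countN, Finset.card_filter, Finset.sum_product, Finset.sum_singleton, sum_ind_eq]

lemma countN_pair {u v : G} (huv : u ≠ v) (D : Finset G) (d : G) :
    countN {u, v} D d = (if u⁻¹ * d ∈ D then 1 else 0) + (if v⁻¹ * d ∈ D then 1 else 0) := by
  rw [countN, Finset.card_filter, Finset.sum_product, Finset.sum_pair huv,
    sum_ind_eq, sum_ind_eq]

end CountHelpers

section IntScaling

lemma int_scaling (J : Finset ℤ) (h1 : (1:ℤ) ∈ J) (h0 : (0:ℤ) ∉ J)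
    (hsc : ∀ x ∈ J, J ⊆ J.image (x * ·)) : ∀ i ∈ J, i = 1 ∨ i = -1 := by
  have hne : J.Nonempty := ⟨1, h1⟩
  have heq : ∀ x ∈ J, J = J.image (x * ·) := by
    intro x hx
    refine Finset.eq_of_subset_of_card_le (hsc x hx) ?_
    rw [Finset.card_image_of_injective _ (mul_right_injective₀ (fun h => h0 (h ▸ hx)))]
  have hsq : ∀ x ∈ J, x * x ∈ J := by
    intro x hx
    rw [heq x hx]
    exact Finset.mem_image_of_mem _ hx
  set m := J.max' hne with hm
  have hm1 : 1 ≤ m := Finset.le_max' J 1 h1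
  have hmm : m = 1 := by
    have h2 : m * m ∈ J := hsq m (J.max'_mem hne)
    have h3 : m * m ≤ m := Finset.le_max' J _ h2
    nlinarith
  intro i hi
  have hisq : i * i ≤ m := Finset.le_max' J _ (hsq i hi)
  have hi0 : i ≠ 0 := fun h => h0 (h ▸ hi)
  have hge : 1 ≤ i * i := by
    rcases lt_or_gt_of_ne hi0 with h | h
    · nlinarith
    · nlinarith
  have : i * i = 1 := le_antisymm (hisq.trans_eq hmm) hge
  exact mul_self_eq_one_iff.mp this

end IntScaling

section Z2Basics

def ee (i j : ℤ) : Z2 := Multiplicative.ofAdd (i, j)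

def fst2 (z : Z2) : ℤ := (Multiplicative.toAdd z).1
def snd2 (z : Z2) : ℤ := (Multiplicative.toAdd z).2

@[simp] lemma ee_mul (i j i' j' : ℤ) : ee i j * ee i' j' = ee (i+i') (j+j') := rfl
@[simp] lemma ee_inv (i j : ℤ) : (ee i j)⁻¹ = ee (-i) (-j) := rfl
@[simp] lemma fst2_ee (i j : ℤ) : fst2 (ee i j) = i := rfl
@[simp] lemma snd2_ee (i j : ℤ) : snd2 (ee i j) = j := rfl
lemma ee_eta (z : Z2) : ee (fst2 z) (snd2 z) = z := rfl
lemma ee_one : ee 0 0 = 1 := rfl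
lemma ga_ee : ga = ee 1 0 := rfl
lemma gb_ee : gb = ee 0 1 := rfl

lemma ee_inj {i j i' j' : ℤ} (h : ee i j = ee i' j') : i = i' ∧ j = j' := by
  have h2 := congrArg Multiplicative.toAdd h
  exact ⟨congrArg Prod.fst h2, congrArg Prod.snd h2⟩

lemma ee_eq_iff {i j i' j' : ℤ} : ee i j = ee i' j' ↔ i = i' ∧ j = j' :=
  ⟨ee_inj, fun ⟨h1, h2⟩ => by rw [h1, h2]⟩

lemma ee_zpow (i j k : ℤ) : (ee i j) ^ k = ee (k*i) (k*j) := by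
  apply Multiplicative.toAdd.injective
  rw [toAdd_zpow]
  change k • ((i, j) : ℤ × ℤ) = (k * i, k * j)
  rw [Prod.smul_mk, smul_eq_mul, smul_eq_mul]

lemma ee_pow (i j : ℤ) (n : ℕ) : (ee i j) ^ n = ee (n*i) (n*j) := by
  rw [← zpow_natCast, ee_zpow]

lemma z2_pow_inj (n : ℕ) (hn : n ≠ 0) : Function.Injective fun g : Z2 => g ^ n := by
  intro a b hab
  have hab' : a ^ n = b ^ n := hab
  rw [← ee_eta a, ← ee_eta b, ee_pow, ee_pow] at hab'
  obtain ⟨h1, h2⟩ := ee_inj hab'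
  have hn' : (n:ℤ) ≠ 0 := by exact_mod_cast hn
  rw [← ee_eta a, ← ee_eta b, ee_eq_iff]
  exact ⟨mul_left_cancel₀ hn' h1, mul_left_cancel₀ hn' h2⟩

lemma mem_zpowers_ga_iff (z : Z2) : z ∈ (↑(Subgroup.zpowers ga) : Set Z2) ↔ snd2 z = 0 := by
  rw [SetLike.mem_coe, Subgroup.mem_zpowers_iff]
  constructor
  · rintro ⟨k, rfl⟩
    rw [ga_ee, ee_zpow]
    simp
  · intro h
    refine ⟨fst2 z, ?_⟩
    rw [ga_ee, ee_zpow, mul_one, mul_zero, ← h, ee_eta]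

lemma ga_ne_one : ga ≠ 1 := by
  rw [ga_ee, ← ee_one]
  intro h
  exact one_ne_zero (ee_inj h).1

end Z2Basics
section Z2Schur
variable {F : Type*} [Field F] [CharZero F]
variable (A : SchurRing F Z2)

/-- Any part meeting `⟨a⟩` lies in `⟨a⟩`. -/
lemma part_H (ha : A.IsASet ↑(Subgroup.zpowers ga)) {C : Finset Z2} (hC : C ∈ A.parts) {z : Z2} (hz : z ∈ C)
    (hz0 : snd2 z = 0) : ∀ w ∈ C, snd2 w = 0 := by
  intro w hw
  have := ha C hC ⟨z, hz, (mem_zpowers_ga_iff z).mpr hz0⟩ (Finset.mem_coe.mpr hw)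
  exact (mem_zpowers_ga_iff w).mp this

lemma one_not_mem_partOf_ga : (1 : Z2) ∉ A.partOf ga := by
  intro h
  have := A.eq_of_mem _ (A.partOf_mem ga) _ A.one_mem 1 h (Finset.mem_singleton_self 1)
  have := this ▸ (A.mem_partOf ga)
  exact ga_ne_one (Finset.mem_singleton.mp this)

/-- The part of `a` is contained in `{a, a⁻¹}`. -/
lemma partOf_ga_sub (ha : A.IsASet ↑(Subgroup.zpowers ga)) : ∀ z ∈ A.partOf ga, z = ga ∨ z = ga⁻¹ := by
  set P := A.partOf ga with hP
  have hPmem := A.partOf_mem ga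
  have hgaP := A.mem_partOf ga
  have hPH : ∀ w ∈ P, snd2 w = 0 := part_H A ha hPmem hgaP rfl
  set Pz : Finset ℤ := P.image fst2 with hPz
  have mem_Pz : ∀ i : ℤ, i ∈ Pz ↔ ee i 0 ∈ P := by
    intro i
    constructor
    · intro hi
      obtain ⟨z, hzP, hz⟩ := Finset.mem_image.mp hi
      rw [← hz, ← hPH z hzP, ee_eta]
      exact hzP
    · intro hi
      exact Finset.mem_image.mpr ⟨ee i 0, hi, rfl⟩
  have h1 : (1:ℤ) ∈ Pz := (mem_Pz 1).mpr hgaP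
  have h0 : (0:ℤ) ∉ Pz := by
    intro h
    exact one_not_mem_partOf_ga A (ee_one ▸ (mem_Pz 0).mp h)
  have hsc : ∀ x ∈ Pz, Pz ⊆ Pz.image (x * ·) := by
    intro x hx i hi
    have hx0 : x ≠ 0 := fun h => h0 (h ▸ hx)
    have hAS : A.IsASet ((fun g : Z2 => g ^ x) '' ↑P) :=
      A.isASet_zpow z2_pow_inj x hx0 (A.part_isASet hPmem)
    have hgx : ee x 0 ∈ ((fun g : Z2 => g ^ x) '' ↑P) :=
      ⟨ga, Finset.mem_coe.mpr hgaP, by show ga ^ x = ee x 0; rw [ga_ee, ee_zpow]; rw [ee_eq_iff]; constructor <;> ring⟩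
    have hsub : ↑P ⊆ ((fun g : Z2 => g ^ x) '' ↑P) :=
      hAS P hPmem ⟨ee x 0, (mem_Pz x).mp hx, hgx⟩
    obtain ⟨z, hzP, hzx⟩ := hsub (Finset.mem_coe.mpr ((mem_Pz i).mp hi))
    rw [Finset.mem_coe] at hzP
    have hz0 := hPH z hzP
    have hzx' : z ^ x = ee i 0 := hzx
    rw [← ee_eta z, hz0, ee_zpow, mul_zero] at hzx'
    have := (ee_inj hzx').1
    exact Finset.mem_image.mpr ⟨fst2 z, (mem_Pz _).mpr (by rw [← hz0, ee_eta]; exact hzP), this⟩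
  intro z hz
  have hz0 := hPH z hz
  have hi := int_scaling Pz h1 h0 hsc (fst2 z) ((mem_Pz _).mpr (by rw [← hz0, ee_eta]; exact hz))
  rcases hi with h | h
  · left; rw [← ee_eta z, hz0, h, ← ga_ee]
  · right; rw [← ee_eta z, hz0, h]; rfl

/-- Every element of a part in `H` lies in the `x₁`-th power image of the part of `a`. -/
lemma part_H_pow (ha : A.IsASet ↑(Subgroup.zpowers ga)) {C : Finset Z2} (hC : C ∈ A.parts) {k : ℤ} (hk : k ≠ 0)
    (hzC : ee k 0 ∈ C) : ∀ w ∈ C, ∃ p ∈ A.partOf ga, w = p ^ k := by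
  intro w hw
  have hAS : A.IsASet ((fun g : Z2 => g ^ k) '' ↑(A.partOf ga)) :=
    A.isASet_zpow z2_pow_inj k hk (A.part_isASet (A.partOf_mem ga))
  have hgk : ee k 0 ∈ ((fun g : Z2 => g ^ k) '' ↑(A.partOf ga)) :=
    ⟨ga, Finset.mem_coe.mpr (A.mem_partOf ga), by show ga ^ k = ee k 0; rw [ga_ee, ee_zpow]; rw [ee_eq_iff]; constructor <;> ring⟩
  have hsub : ↑C ⊆ ((fun g : Z2 => g ^ k) '' ↑(A.partOf ga)) :=
    hAS C hC ⟨ee k 0, hzC, hgk⟩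
  obtain ⟨p, hp, hpk⟩ := hsub (Finset.mem_coe.mpr hw)
  exact ⟨p, Finset.mem_coe.mp hp, hpk.symm⟩

/-- Parts inside `H` are contained in `{z, z⁻¹}`. -/
lemma part_H_pair (ha : A.IsASet ↑(Subgroup.zpowers ga)) {C : Finset Z2} (hC : C ∈ A.parts) {z : Z2} (hzC : z ∈ C)
    (hz0 : snd2 z = 0) : ∀ w ∈ C, w = z ∨ w = z⁻¹ := by
  rcases eq_or_ne z 1 with rfl | hz1
  · have : C = {1} := A.eq_of_mem _ hC _ A.one_mem 1 hzC (Finset.mem_singleton_self 1)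
    intro w hw
    left
    exact Finset.mem_singleton.mp (this ▸ hw)
  · set k := fst2 z with hk
    have hk0 : k ≠ 0 := by
      intro h
      exact hz1 (by rw [← ee_eta z, hz0, ← hk, h]; exact ee_one)
    have hze : z = ee k 0 := by rw [← ee_eta z, ← hz0, hk]
    intro w hw
    obtain ⟨p, hpP, hpk⟩ := part_H_pow A ha hC hk0 (by rwa [← hze]) w hw
    rcases partOf_ga_sub A ha p hpP with rfl | rfl
    · left; rw [hpk, hze, ga_ee, ee_zpow, mul_one, mul_zero]
    · right
      rw [hpk, hze, ga_ee, ee_inv, ee_zpow, ee_inv]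
      refine ee_eq_iff.mpr ⟨by ring, by ring⟩

end Z2Schur
section Z2Schur2
variable {F : Type*} [Field F] [CharZero F]
variable (A : SchurRing F Z2)

lemma ga_inv_ee : ga⁻¹ = ee (-1) 0 := by
  rw [ga_ee, ee_inv]
  exact ee_eq_iff.mpr ⟨rfl, by norm_num⟩

lemma ga_ne_ga_inv : ga ≠ ga⁻¹ := by
  rw [ga_inv_ee, ga_ee]
  intro h
  have := (ee_inj h).1
  omega

lemma mem_ga_pair_iff (i j : ℤ) : ee i j ∈ ({ga, ga⁻¹} : Finset Z2) ↔ (j = 0 ∧ (i = 1 ∨ i = -1)) := by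
  rw [Finset.mem_insert, Finset.mem_singleton, ga_inv_ee, ga_ee]
  constructor
  · rintro (h | h)
    · obtain ⟨h1, h2⟩ := ee_inj h; exact ⟨h2, Or.inl h1⟩
    · obtain ⟨h1, h2⟩ := ee_inj h; exact ⟨h2, Or.inr h1⟩
  · rintro ⟨rfl, (rfl | rfl)⟩
    · exact Or.inl rfl
    · exact Or.inr rfl

lemma symAll (ha : A.IsASet ↑(Subgroup.zpowers ga)) (hsym1 : ga⁻¹ ∈ A.partOf ga) :
    ∀ k : ℤ, k ≠ 0 → ee (-k) 0 ∈ A.partOf (ee k 0) := by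
  have hPeq : A.partOf ga = {ga, ga⁻¹} := by
    apply Finset.Subset.antisymm
    · intro w hw
      rcases partOf_ga_sub A ha w hw with rfl | rfl
      · exact Finset.mem_insert_self _ _
      · exact Finset.mem_insert.mpr (Or.inr (Finset.mem_singleton_self _))
    · intro w hw
      rcases Finset.mem_insert.mp hw with rfl | hw2
      · exact A.mem_partOf ga
      · rw [Finset.mem_singleton.mp hw2]; exact hsym1
  have main : ∀ n : ℕ, ∀ k : ℤ, k.natAbs = n → k ≠ 0 → ee (-k) 0 ∈ A.partOf (ee k 0) := by
    intro n
    induction n using Nat.strong_induction_on with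
    | _ n ih =>
    intro k hkn hk0
    rcases eq_or_ne k 1 with rfl | hk1
    · rw [show ee (1:ℤ) 0 = ga from (ga_ee).symm]
      rw [show ee (-1:ℤ) 0 = ga⁻¹ from (ga_inv_ee).symm]
      exact hsym1
    rcases eq_or_ne k (-1) with rfl | hkm1
    · rw [show ee (-1:ℤ) 0 = ga⁻¹ from (ga_inv_ee).symm]
      rw [A.partOf_eq (A.partOf_mem ga) hsym1]
      rw [show ee (-(-1):ℤ) 0 = ga from by rw [ga_ee]; exact ee_eq_iff.mpr ⟨by norm_num, rfl⟩]
      exact A.mem_partOf ga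
    by_contra hcon
    set C := A.partOf (ee k 0) with hC
    have hCmem : C ∈ A.parts := A.partOf_mem _
    have hkC : ee k 0 ∈ C := A.mem_partOf _
    have hCsing : C = {ee k 0} := by
      apply Finset.eq_singleton_iff_unique_mem.mpr
      refine ⟨hkC, fun w hw => ?_⟩
      rcases part_H_pair A ha hCmem hkC rfl w hw with h | h
      · exact h
      · exfalso
        apply hcon
        rw [← (show (ee k 0)⁻¹ = ee (-k) 0 from by rw [ee_inv]; exact ee_eq_iff.mpr ⟨rfl, by norm_num⟩), ← h]
        exact hw
    set j : ℤ := if 0 < k then k - 1 else k + 1 with hj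
    have hj0 : j ≠ 0 := by rw [hj]; split <;> omega
    have hjlt : j.natAbs < n := by rw [hj]; split <;> omega
    have hIH : ee (-j) 0 ∈ A.partOf (ee j 0) := ih j.natAbs hjlt j rfl hj0
    have hcnt := A.count_const hCmem (hPeq ▸ A.partOf_mem ga) (A.partOf_mem (ee j 0))
      (A.mem_partOf (ee j 0)) hIH
    rw [hCsing] at hcnt
    rw [countN_singleton, countN_singleton] at hcnt
    have e1 : (ee k 0)⁻¹ * ee j 0 = ee (j - k) 0 := by
      rw [ee_inv, ee_mul]; exact ee_eq_iff.mpr ⟨by ring, by ring⟩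
    have e2 : (ee k 0)⁻¹ * ee (-j) 0 = ee (-j - k) 0 := by
      rw [ee_inv, ee_mul]; exact ee_eq_iff.mpr ⟨by ring, by ring⟩
    rw [e1, e2] at hcnt
    have hmem1 : ee (j - k) 0 ∈ ({ga, ga⁻¹} : Finset Z2) := by
      rw [mem_ga_pair_iff]
      refine ⟨rfl, ?_⟩
      rw [hj]; split <;> omega
    have hmem2 : ee (-j - k) 0 ∉ ({ga, ga⁻¹} : Finset Z2) := by
      rw [mem_ga_pair_iff]
      rintro ⟨-, h | h⟩ <;> (rw [hj] at h; revert h; split <;> omega)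
    rw [if_pos hmem1, if_neg hmem2] at hcnt
    exact one_ne_zero hcnt
  exact fun k hk => main k.natAbs k rfl hk

end Z2Schur2
section Z2Schur3
variable {F : Type*} [Field F] [CharZero F]
variable (A : SchurRing F Z2)

lemma snd2_mul (u v : Z2) : snd2 (u * v) = snd2 u + snd2 v := rfl
lemma fst2_mul (u v : Z2) : fst2 (u * v) = fst2 u + fst2 v := rfl
lemma snd2_zpow (z : Z2) (k : ℤ) : snd2 (z ^ k) = k * snd2 z := by
  rw [← ee_eta z, ee_zpow]; rfl

lemma countN_pos_iff {G : Type*} [CommGroup G] [DecidableEq G] (C D : Finset G) (d : G) :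
    0 < countN C D d ↔ ∃ u ∈ C, ∃ v ∈ D, u * v = d := by
  rw [countN, Finset.card_pos]
  constructor
  · rintro ⟨p, hp⟩
    rw [Finset.mem_filter, Finset.mem_product] at hp
    exact ⟨p.1, hp.1.1, p.2, hp.1.2, hp.2⟩
  · rintro ⟨u, hu, v, hv, huv⟩
    exact ⟨(u, v), Finset.mem_filter.mpr ⟨Finset.mem_product.mpr ⟨hu, hv⟩, huv⟩⟩

lemma snd_image_subset (ha : A.IsASet ↑(Subgroup.zpowers ga))
    {C C' : Finset Z2} (hC : C ∈ A.parts) (hC' : C' ∈ A.parts)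
    {z z' : Z2} (hz : z ∈ C) (hz' : z' ∈ C') (hss : snd2 z = snd2 z') :
    C'.image snd2 ⊆ C.image snd2 := by
  set E := A.partOf (ee (fst2 z' - fst2 z) 0) with hE
  have hEmem : E ∈ A.parts := A.partOf_mem _
  have hEH : ∀ w ∈ E, snd2 w = 0 := part_H A ha hEmem (A.mem_partOf _) rfl
  have hpos : 0 < countN C E z' := by
    rw [countN_pos_iff]
    refine ⟨z, hz, ee (fst2 z' - fst2 z) 0, A.mem_partOf _, ?_⟩
    apply Multiplicative.toAdd.injective
    exact Prod.ext_iff.mpr ⟨by show fst2 z + (fst2 z' - fst2 z) = fst2 z'; ring,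
      by show snd2 z + 0 = snd2 z'; omega⟩
  intro y hy
  obtain ⟨c', hc', rfl⟩ := Finset.mem_image.mp hy
  have := A.count_const hC hEmem hC' hz' hc'
  rw [this] at hpos
  obtain ⟨u, hu, v, hv, huv⟩ := (countN_pos_iff _ _ _).mp hpos
  refine Finset.mem_image.mpr ⟨u, hu, ?_⟩
  rw [← huv, snd2_mul, hEH v hv, add_zero]

lemma snd_image_eq (ha : A.IsASet ↑(Subgroup.zpowers ga))
    {C C' : Finset Z2} (hC : C ∈ A.parts) (hC' : C' ∈ A.parts)
    {z z' : Z2} (hz : z ∈ C) (hz' : z' ∈ C') (hss : snd2 z = snd2 z') :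
    C.image snd2 = C'.image snd2 :=
  Finset.Subset.antisymm (snd_image_subset A ha hC' hC hz' hz hss.symm)
    (snd_image_subset A ha hC hC' hz hz' hss)

lemma sndD_pm (ha : A.IsASet ↑(Subgroup.zpowers ga))
    {D : Finset Z2} (hD : D ∈ A.parts) (hbD : gb ∈ D) :
    ∀ d ∈ D, snd2 d = 1 ∨ snd2 d = -1 := by
  set J := D.image snd2 with hJ
  have h1 : (1:ℤ) ∈ J := Finset.mem_image.mpr ⟨gb, hbD, rfl⟩
  have h0 : (0:ℤ) ∉ J := by
    intro h
    obtain ⟨z, hz, hz0⟩ := Finset.mem_image.mp h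
    have := part_H A ha hD hz hz0 gb hbD
    exact one_ne_zero this
  have hsc : ∀ x ∈ J, J ⊆ J.image (x * ·) := by
    intro x hx
    obtain ⟨d₀, hd₀, hd₀x⟩ := Finset.mem_image.mp hx
    have hx0 : x ≠ 0 := fun h => h0 (h ▸ hx)
    have hAS : A.IsASet ((fun g : Z2 => g ^ x) '' ↑D) :=
      A.isASet_zpow z2_pow_inj x hx0 (A.part_isASet hD)
    have hgbx : ee 0 x ∈ ((fun g : Z2 => g ^ x) '' ↑D) :=
      ⟨gb, Finset.mem_coe.mpr hbD, by
        show gb ^ x = ee 0 x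
        rw [gb_ee, ee_zpow]
        exact ee_eq_iff.mpr ⟨by ring, by ring⟩⟩
    have hsub : ↑(A.partOf (ee 0 x)) ⊆ ((fun g : Z2 => g ^ x) '' ↑D) :=
      hAS _ (A.partOf_mem _) ⟨ee 0 x, A.mem_partOf _, hgbx⟩
    have hQ1 : (A.partOf (ee 0 x)).image snd2 = J :=
      snd_image_eq A ha (A.partOf_mem _) hD (A.mem_partOf _) hd₀ (by rw [snd2_ee, hd₀x])
    intro i hi
    rw [← hQ1] at hi
    obtain ⟨w, hw, hwi⟩ := Finset.mem_image.mp hi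
    obtain ⟨u, huD, hux⟩ := hsub (Finset.mem_coe.mpr hw)
    have : snd2 w = x * snd2 u := by rw [← hux]; exact snd2_zpow u x
    refine Finset.mem_image.mpr ⟨snd2 u, Finset.mem_image.mpr ⟨u, Finset.mem_coe.mp huD, rfl⟩, ?_⟩
    rw [← hwi, this]
  intro d hd
  exact int_scaling J h1 h0 hsc (snd2 d) (Finset.mem_image.mpr ⟨d, hd, rfl⟩)

end Z2Schur3
lemma gb_inv_ee : gb⁻¹ = ee 0 (-1) := by
  rw [gb_ee, ee_inv]
  exact ee_eq_iff.mpr ⟨by norm_num, rfl⟩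

lemma gb_mul_ga_zpow (s : ℤ) : gb * ga ^ s = ee s 1 := by
  rw [gb_ee, ga_ee, ee_zpow, ee_mul]
  exact ee_eq_iff.mpr ⟨by ring, by ring⟩

lemma gb_inv_mul_ga_zpow (s : ℤ) : gb⁻¹ * ga ^ s = ee s (-1) := by
  rw [gb_inv_ee, ga_ee, ee_zpow, ee_mul]
  exact ee_eq_iff.mpr ⟨by ring, by ring⟩

lemma ee_inv_zero (k : ℤ) : (ee k 0)⁻¹ = ee (-k) 0 := by
  rw [ee_inv]
  exact ee_eq_iff.mpr ⟨rfl, by norm_num⟩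

/-- The five possible shapes of the basic set containing `b` when `⟨a⟩` is an
`A`-subgroup. -/
theorem basic_set_containing_b {F : Type*} [Field F] [CharZero F]
    (A : SchurRing F Z2) (ha : A.IsASet ↑(Subgroup.zpowers ga))
    (D : Finset Z2) (hD : D ∈ A.parts) (hbD : gb ∈ D) :
    D = {gb} ∨
    D = {gb, gb⁻¹} ∨
    (∃ i₀ : ℤ, i₀ ≠ 0 ∧ D = {gb * ga ^ i₀, gb}) ∨
    (∃ i₁ : ℤ, i₁ ≠ 0 ∧ D = {gb⁻¹ * ga ^ i₁, gb}) ∨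
    (∃ i₂ : ℤ, i₂ ≠ 0 ∧ D = {gb, gb * ga ^ i₂, gb⁻¹, gb⁻¹ * ga ^ (-i₂)}) := by
  classical
  have hJ : ∀ d ∈ D, snd2 d = 1 ∨ snd2 d = -1 := sndD_pm A ha hD hbD
  set Wset : Finset ℤ := ((D ×ˢ D).filter fun p => snd2 p.1 = snd2 p.2).image
      (fun p => fst2 p.1 - fst2 p.2) with hWsetdef
  have hW0 : (0:ℤ) ∈ Wset := Finset.mem_image.mpr ⟨(gb, gb),
    Finset.mem_filter.mpr ⟨Finset.mem_product.mpr ⟨hbD, hbD⟩, rfl⟩, by ring⟩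
  have hWne : Wset.Nonempty := ⟨0, hW0⟩
  set W := Wset.max' hWne with hWdef
  have hWnn : (0:ℤ) ≤ W := Finset.le_max' _ 0 hW0
  have hWset_mem : ∀ k : ℤ, k ∈ Wset ↔
      ∃ d1 ∈ D, ∃ d2 ∈ D, snd2 d1 = snd2 d2 ∧ fst2 d1 - fst2 d2 = k := by
    intro k
    simp only [hWsetdef, Finset.mem_image, Finset.mem_filter, Finset.mem_product]
    constructor
    · rintro ⟨p, ⟨⟨h1, h2⟩, h3⟩, h4⟩; exact ⟨p.1, h1, p.2, h2, h3, h4⟩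
    · rintro ⟨d1, h1, d2, h2, h3, h4⟩; exact ⟨(d1,d2), ⟨⟨h1,h2⟩,h3⟩, h4⟩
  have hWle : ∀ k ∈ Wset, k ≤ W := fun k hk => Finset.le_max' _ k hk
  rcases eq_or_lt_of_le hWnn with hWz | hWpos
  · -- W = 0 : every fiber has at most one element
    have huniq : ∀ d1 ∈ D, ∀ d2 ∈ D, snd2 d1 = snd2 d2 → d1 = d2 := by
      intro d1 h1 d2 h2 hss
      by_contra hne
      have hf : fst2 d1 ≠ fst2 d2 := by
        intro h
        exact hne (by rw [← ee_eta d1, ← ee_eta d2, h, hss])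
      have m1 := hWle _ ((hWset_mem _).mpr ⟨d1, h1, d2, h2, hss, rfl⟩)
      have m2 := hWle _ ((hWset_mem _).mpr ⟨d2, h2, d1, h1, hss.symm, rfl⟩)
      omega
    by_cases hminus : ∃ d ∈ D, snd2 d = -1
    · obtain ⟨dm, hdm, hdms⟩ := hminus
      obtain ⟨t, hdme⟩ : ∃ t : ℤ, dm = ee t (-1) :=
        ⟨fst2 dm, by rw [← hdms]; exact (ee_eta dm).symm⟩
      have hDeq : D = {gb, ee t (-1)} := by
        apply Finset.Subset.antisymm
        · intro d hd
          rcases hJ d hd with h | h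
          · rw [huniq d hd gb hbD (by rw [h]; rfl)]
            exact Finset.mem_insert_self _ _
          · rw [huniq d hd dm hdm (by rw [h, hdms]), hdme]
            exact Finset.mem_insert.mpr (Or.inr (Finset.mem_singleton_self _))
        · intro d hd
          rcases Finset.mem_insert.mp hd with rfl | hd2
          · exact hbD
          · rw [Finset.mem_singleton.mp hd2, ← hdme]; exact hdm
      rcases eq_or_ne t 0 with rfl | ht0
      · right; left
        rw [hDeq, show ee (0:ℤ) (-1) = gb⁻¹ from gb_inv_ee.symm]
      · right; right; right; left
        exact ⟨t, ht0, by rw [hDeq, gb_inv_mul_ga_zpow, Finset.pair_comm]⟩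
    · left
      apply Finset.eq_singleton_iff_unique_mem.mpr
      refine ⟨hbD, fun d hd => ?_⟩
      rcases hJ d hd with h | h
      · exact huniq d hd gb hbD (by rw [h]; rfl)
      · exact absurd ⟨d, hd, h⟩ hminus
  ·
    -- W > 0
    have hWW : W ∈ Wset := Wset.max'_mem hWne
    obtain ⟨d1, hd1, d2, hd2, hs12, hf12⟩ := (hWset_mem W).mp hWW
    set E := A.partOf (ee W 0) with hEdef
    have hEmem : E ∈ A.parts := A.partOf_mem _
    have hEkE : ee W 0 ∈ E := A.mem_partOf _
    have hEsub : ∀ z ∈ E, z = ee W 0 ∨ z = ee (-W) 0 := by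
      intro z hz
      rcases part_H_pair A ha hEmem hEkE rfl z hz with h | h
      · exact Or.inl h
      · exact Or.inr (by rw [h, ee_inv_zero])
    have hcnt_eq : ∀ d ∈ D, ∀ d' ∈ D, countN E D d = countN E D d' :=
      fun d hd d' hd' => A.count_const hEmem hD hD hd hd'
    have hcnt_d1 : 0 < countN E D d1 := by
      rw [countN_pos_iff]
      refine ⟨ee W 0, hEkE, d2, hd2, ?_⟩
      apply Multiplicative.toAdd.injective
      exact Prod.ext_iff.mpr ⟨by show W + fst2 d2 = fst2 d1; omega,
        by show 0 + snd2 d2 = snd2 d1; omega⟩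
    have hcnt_pos : ∀ d ∈ D, 0 < countN E D d := by
      intro d hd
      rw [hcnt_eq d hd d1 hd1]
      exact hcnt_d1
    by_cases hyW : ee (-W) 0 ∈ E
    case neg =>
      -- E = {ee W 0} : shift contradiction
      exfalso
      have hEsing : E = {ee W 0} := by
        apply Finset.eq_singleton_iff_unique_mem.mpr
        refine ⟨hEkE, fun w hw => ?_⟩
        rcases hEsub w hw with h | h
        · exact h
        · exact absurd (h ▸ hw) hyW
      have hmap : ∀ d ∈ D, ee (-W) 0 * d ∈ D := by
        intro d hd
        obtain ⟨u, huE, v, hvD, huv⟩ := (countN_pos_iff _ _ _).mp (hcnt_pos d hd)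
        have hu : u = ee W 0 := Finset.mem_singleton.mp (hEsing ▸ huE)
        have hv : ee (-W) 0 * d = v := by
          rw [← huv, hu, ← mul_assoc, ee_mul,
            show ee (-W + W) (0 + 0) = 1 from by
              rw [show -W + W = (0:ℤ) from by ring]; exact ee_one,
            one_mul]
        rw [hv]; exact hvD
      have himg : D.image (fun d => ee (-W) 0 * d) = D := by
        apply Finset.eq_of_subset_of_card_le
        · intro y hy
          obtain ⟨d, hd, rfl⟩ := Finset.mem_image.mp hy
          exact hmap d hd
        · rw [Finset.card_image_of_injective _ (mul_right_injective _)]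
      have hsum := congrArg (fun s : Finset Z2 => ∑ z ∈ s, fst2 z) himg
      rw [Finset.sum_image (fun a _ b _ h => mul_left_cancel h)] at hsum
      rw [Finset.sum_congr rfl (fun d _ => show fst2 (ee (-W) 0 * d) = fst2 d - W from by
        rw [fst2_mul, fst2_ee]; ring)] at hsum
      rw [Finset.sum_sub_distrib, Finset.sum_const, nsmul_eq_mul, sub_eq_self] at hsum
      rcases mul_eq_zero.mp hsum with h | h
      · have : (0:ℤ) < (D.card : ℤ) := by
          exact_mod_cast Finset.card_pos.mpr ⟨gb, hbD⟩
        omega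
      · omega
    case pos =>
      have hEpair : E = {ee W 0, ee (-W) 0} := by
        apply Finset.Subset.antisymm
        · intro z hz
          rcases hEsub z hz with rfl | rfl
          · exact Finset.mem_insert_self _ _
          · exact Finset.mem_insert.mpr (Or.inr (Finset.mem_singleton_self _))
        · intro z hz
          rcases Finset.mem_insert.mp hz with rfl | hz2
          · exact hEkE
          · rw [Finset.mem_singleton.mp hz2]; exact hyW
      have hWneq : ee W 0 ≠ ee (-W) 0 := by
        intro h
        have := (ee_inj h).1
        omega
      have hsym1 : ga⁻¹ ∈ A.partOf ga := by
        obtain ⟨p, hpP, hpk⟩ := part_H_pow A ha hEmem (k := W) (by omega) hEkE (ee (-W) 0) hyW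
        rcases partOf_ga_sub A ha p hpP with rfl | rfl
        · exfalso
          rw [ga_ee, ee_zpow] at hpk
          have := (ee_inj hpk).1
          omega
        · exact hpP
      have hSym : ∀ k : ℤ, k ≠ 0 → ee (-k) 0 ∈ A.partOf (ee k 0) := symAll A ha hsym1
      have hcnt_le : ∀ d ∈ D, countN E D d ≤ 1 := by
        intro d hd
        apply Finset.card_le_one.mpr
        intro p hp q hq
        rw [Finset.mem_filter, Finset.mem_product] at hp hq
        obtain ⟨⟨hp1, hp2⟩, hp3⟩ := hp
        obtain ⟨⟨hq1, hq2⟩, hq3⟩ := hq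
        have key : ∀ a b : Z2, a ∈ E → b ∈ E → a ≠ b →
            (a⁻¹ * d ∈ D) → (b⁻¹ * d ∈ D) → False := by
          intro a b haE hbE hab haD hbD'
          have h2W : (2*W) ∈ Wset ∨ (-(2*W)) ∈ Wset := by
            rcases hEsub a haE with rfl | rfl <;> rcases hEsub b hbE with rfl | rfl
            · exact absurd rfl hab
            · left
              refine (hWset_mem _).mpr ⟨(ee (-W) 0)⁻¹ * d, hbD', (ee W 0)⁻¹ * d, haD, ?_, ?_⟩
              · simp [ee_inv_zero, snd2_mul, snd2_ee]
              · rw [ee_inv_zero, ee_inv_zero, fst2_mul, fst2_mul, fst2_ee, fst2_ee]; ring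
            · left
              refine (hWset_mem _).mpr ⟨(ee (-W) 0)⁻¹ * d, haD, (ee W 0)⁻¹ * d, hbD', ?_, ?_⟩
              · simp [ee_inv_zero, snd2_mul, snd2_ee]
              · rw [ee_inv_zero, ee_inv_zero, fst2_mul, fst2_mul, fst2_ee, fst2_ee]; ring
            · exact absurd rfl hab
          rcases h2W with h | h
          · have := hWle _ h; omega
          · have := hWle _ h
            have : (2*W) ∈ Wset := by
              obtain ⟨e1, he1, e2, he2, hss, hff⟩ := (hWset_mem _).mp h
              exact (hWset_mem _).mpr ⟨e2, he2, e1, he1, hss.symm, by omega⟩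
            have := hWle _ this
            omega
        by_contra hpq
        rcases eq_or_ne p.1 q.1 with h1 | h1
        · apply hpq
          have h2 : p.2 = q.2 := mul_left_cancel (a := p.1) (by rw [hp3, h1, hq3])
          exact Prod.ext h1 h2
        · have hpd : p.1⁻¹ * d ∈ D := by
            rw [← hp3, ← mul_assoc, inv_mul_cancel, one_mul]; exact hp2
          have hqd : q.1⁻¹ * d ∈ D := by
            rw [← hq3, ← mul_assoc, inv_mul_cancel, one_mul]; exact hq2
          exact key p.1 q.1 hp1 hq1 h1 hpd hqd
      have hcnt1 : ∀ d ∈ D, countN E D d = 1 := fun d hd =>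
        le_antisymm (hcnt_le d hd) (hcnt_pos d hd)
      have hxor : ∀ d ∈ D, (ee (-W) 0 * d ∈ D ∧ ¬ (ee W 0 * d ∈ D)) ∨
          (¬ (ee (-W) 0 * d ∈ D) ∧ ee W 0 * d ∈ D) := by
        intro d hd
        have h1 := hcnt1 d hd
        rw [hEpair, countN_pair hWneq, ee_inv_zero, ee_inv_zero] at h1
        rw [show (- -W) = W from by ring] at h1
        by_cases hA : ee (-W) 0 * d ∈ D <;> by_cases hB : ee W 0 * d ∈ D
        · rw [if_pos hA, if_pos hB] at h1; omega
        · exact Or.inl ⟨hA, hB⟩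
        · exact Or.inr ⟨hA, hB⟩
        · rw [if_neg hA, if_neg hB] at h1; omega
      have hee_shift : ∀ (c i j : ℤ), ee c 0 * ee i j = ee (i + c) j := by
        intro c i j
        rw [ee_mul]
        exact ee_eq_iff.mpr ⟨by ring, by ring⟩
      have fiber : ∀ j : ℤ, (∃ i0 : ℤ, ee i0 j ∈ D) →
          ∃ m : ℤ, ∀ i : ℤ, (ee i j ∈ D ↔ (i = m ∨ i = m + W)) := by
        intro j ⟨i0, hi0⟩
        set S : Finset ℤ := (D.filter fun z => snd2 z = j).image fst2 with hSdef
        have hmemS : ∀ i : ℤ, i ∈ S ↔ ee i j ∈ D := by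
          intro i
          constructor
          · intro hi
            obtain ⟨z, hz, rfl⟩ := Finset.mem_image.mp hi
            rw [Finset.mem_filter] at hz
            rw [show ee (fst2 z) j = z from by rw [← hz.2]; exact ee_eta z]
            exact hz.1
          · intro hi
            exact Finset.mem_image.mpr ⟨ee i j, Finset.mem_filter.mpr ⟨hi, rfl⟩, rfl⟩
        have hSne : S.Nonempty := ⟨i0, (hmemS i0).mpr hi0⟩
        have hxorS : ∀ i ∈ S, (i - W ∈ S ∧ i + W ∉ S) ∨ (i - W ∉ S ∧ i + W ∈ S) := by
          intro i hi
          rcases hxor (ee i j) ((hmemS i).mp hi) with ⟨h1, h2⟩ | ⟨h1, h2⟩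
          · left
            constructor
            · rw [hmemS, show i - W = i + (-W) from by ring, ← hee_shift]; exact h1
            · rw [hmemS, ← hee_shift]; exact h2
          · right
            constructor
            · rw [hmemS, show i - W = i + (-W) from by ring, ← hee_shift]; exact h1
            · rw [hmemS, ← hee_shift]; exact h2
        set M := S.max' hSne with hM
        set m := S.min' hSne with hm
        have hMS : M ∈ S := S.max'_mem hSne
        have hmS : m ∈ S := S.min'_mem hSne
        have hMW : M - W ∈ S := by
          rcases hxorS M hMS with ⟨h1, _⟩ | ⟨_, h2⟩
          · exact h1
          · exact absurd (S.le_max' _ h2) (by omega)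
        have hdiam : M - m ≤ W :=
          hWle _ ((hWset_mem _).mpr ⟨ee M j, (hmemS M).mp hMS, ee m j, (hmemS m).mp hmS,
            rfl, by rw [fst2_ee, fst2_ee]⟩)
        have hmMW : m = M - W := by
          have := S.min'_le _ hMW
          omega
        refine ⟨m, fun i => ?_⟩
        constructor
        · intro hi
          have hiS := (hmemS i).mpr hi
          have hile : i ≤ M := S.le_max' i hiS
          have hige : m ≤ i := S.min'_le i hiS
          rcases hxorS i hiS with ⟨h1, _⟩ | ⟨_, h2⟩
          · have := S.min'_le _ h1
            right; omega
          · have := S.le_max' _ h2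
            left; omega
        · rintro (rfl | rfl)
          · exact (hmemS m).mp hmS
          · exact (hmemS _).mp (by rw [show m + W = M from by omega]; exact hMS)
      obtain ⟨m1, hfib1⟩ := fiber 1 ⟨0, hbD⟩
      have hm1 : m1 = 0 ∨ m1 = -W := by
        have := (hfib1 0).mp hbD
        omega
      have hfib1' : ∃ s : ℤ, (s = W ∨ s = -W) ∧ ∀ i : ℤ, (ee i 1 ∈ D ↔ (i = 0 ∨ i = s)) := by
        rcases hm1 with rfl | rfl
        · exact ⟨W, Or.inl rfl, fun i => by rw [hfib1 i]; omega⟩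
        · exact ⟨-W, Or.inr rfl, fun i => by rw [hfib1 i]; constructor <;> omega⟩
      obtain ⟨s, hsW, hfib1'⟩ := hfib1'
      have hs0 : s ≠ 0 := by omega
      by_cases hm : ∃ i0 : ℤ, ee i0 (-1) ∈ D
      case neg =>
        -- case 3
        right; right; left
        refine ⟨s, hs0, ?_⟩
        rw [gb_mul_ga_zpow]
        apply Finset.Subset.antisymm
        · intro d hd
          rcases hJ d hd with h | h
          · have : ee (fst2 d) 1 ∈ D := by rw [← h, ee_eta]; exact hd
            rcases (hfib1' (fst2 d)).mp this with h0 | h0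
            · apply Finset.mem_insert.mpr
              right
              rw [Finset.mem_singleton, ← ee_eta d, h, h0, ← gb_ee]
            · apply Finset.mem_insert.mpr
              left
              rw [← ee_eta d, h, h0]
          · exact absurd ⟨fst2 d, by rw [← h, ee_eta]; exact hd⟩ hm
        · intro z hz
          rcases Finset.mem_insert.mp hz with rfl | hz2
          · exact (hfib1' s).mpr (Or.inr rfl)
          · rw [Finset.mem_singleton.mp hz2]; exact hbD
      case pos =>
        obtain ⟨t, hfib2⟩ := fiber (-1) hm
        by_cases hgbinv : ee 0 (-1) ∈ D
        case pos =>
          -- case 5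
          right; right; right; right
          refine ⟨s, hs0, ?_⟩
          have hDsym : ∀ g : Z2, g ∈ D ↔ g⁻¹ ∈ D := by
            obtain ⟨D', hD', hiff⟩ := A.inv_mem D hD
            have hgbD' : gb ∈ D' := (hiff gb).mpr (by rw [gb_inv_ee]; exact hgbinv)
            have hDD : D' = D := A.eq_of_mem _ hD' _ hD gb hgbD' hbD
            intro g
            constructor
            · intro hg
              exact (hiff g).mp (by rw [hDD]; exact hg)
            · intro hg
              have := (hiff g).mpr hg
              rwa [hDD] at this
          have hfibm : ∀ i : ℤ, ee i (-1) ∈ D ↔ (i = 0 ∨ i = -s) := by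
            intro i
            rw [hDsym (ee i (-1)),
              show (ee i (-1))⁻¹ = ee (-i) 1 from by
                rw [ee_inv]; exact ee_eq_iff.mpr ⟨rfl, by ring⟩,
              hfib1' (-i)]
            omega
          rw [gb_mul_ga_zpow, gb_inv_mul_ga_zpow, gb_inv_ee]
          apply Finset.Subset.antisymm
          · intro d hd
            simp only [Finset.mem_insert, Finset.mem_singleton]
            rcases hJ d hd with h | h
            · have : ee (fst2 d) 1 ∈ D := by rw [← h, ee_eta]; exact hd
              rcases (hfib1' (fst2 d)).mp this with h0 | h0
              · left; rw [← ee_eta d, h, h0, ← gb_ee]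
              · right; left; rw [← ee_eta d, h, h0]
            · have : ee (fst2 d) (-1) ∈ D := by rw [← h, ee_eta]; exact hd
              rcases (hfibm (fst2 d)).mp this with h0 | h0
              · right; right; left; rw [← ee_eta d, h, h0]
              · right; right; right; rw [← ee_eta d, h, h0]
          · intro z hz
            simp only [Finset.mem_insert, Finset.mem_singleton] at hz
            rcases hz with rfl | rfl | rfl | rfl
            · exact hbD
            · exact (hfib1' s).mpr (Or.inr rfl)
            · exact hgbinv
            · exact (hfibm (-s)).mpr (Or.inr rfl)
        case neg =>
          -- contradiction case
          exfalso
          have ht0 : t ≠ 0 := fun h => hgbinv ((hfib2 0).mpr (Or.inl h.symm))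
          have htW : t + W ≠ 0 := fun h => hgbinv ((hfib2 0).mpr (Or.inr (by omega)))
          have hDeq : D = {ee 0 1, ee s 1, ee t (-1), ee (t+W) (-1)} := by
            apply Finset.Subset.antisymm
            · intro d hd
              simp only [Finset.mem_insert, Finset.mem_singleton]
              rcases hJ d hd with h | h
              · have : ee (fst2 d) 1 ∈ D := by rw [← h, ee_eta]; exact hd
                rcases (hfib1' (fst2 d)).mp this with h0 | h0
                · left; rw [← ee_eta d, h, h0]
                · right; left; rw [← ee_eta d, h, h0]
              · have : ee (fst2 d) (-1) ∈ D := by rw [← h, ee_eta]; exact hd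
                rcases (hfib2 (fst2 d)).mp this with h0 | h0
                · right; right; left; rw [← ee_eta d, h, h0]
                · right; right; right; rw [← ee_eta d, h, h0]
            · intro z hz
              simp only [Finset.mem_insert, Finset.mem_singleton] at hz
              rcases hz with rfl | rfl | rfl | rfl
              · exact hbD
              · exact (hfib1' s).mpr (Or.inr rfl)
              · exact (hfib2 t).mpr (Or.inl rfl)
              · exact (hfib2 (t+W)).mpr (Or.inr rfl)
          have hMsym : ∀ k : ℤ, countN D D (ee k 0) = countN D D (ee (-k) 0) := by
            intro k
            rcases eq_or_ne k 0 with rfl | hk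
            · rw [show (-0 : ℤ) = 0 from by ring]
            · exact A.count_const hD hD (A.partOf_mem (ee k 0)) (A.mem_partOf _) (hSym k hk)
          set Phi : Finset (Z2 × Z2) := (D ×ˢ D).filter (fun p => snd2 (p.1 * p.2) = 0) with hPhi
          set T : ℤ := ∑ p ∈ Phi, fst2 (p.1 * p.2) with hT
          set K : Finset ℤ := Phi.image (fun p => fst2 (p.1 * p.2)) with hKdef
          have hMk : ∀ k : ℤ, (Phi.filter fun p => fst2 (p.1 * p.2) = k).card
              = countN D D (ee k 0) := by
            intro k
            rw [hPhi, Finset.filter_filter, countN]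
            congr 1
            apply Finset.filter_congr
            intro p _
            constructor
            · rintro ⟨h1, h2⟩
              rw [← ee_eta (p.1 * p.2), h2, h1]
            · intro h
              rw [h]
              exact ⟨rfl, rfl⟩
          have hTK : T = ∑ k ∈ K, countN D D (ee k 0) • k := by
            rw [hT]
            have hcomp := Finset.sum_comp (id : ℤ → ℤ) (fun p : Z2 × Z2 => fst2 (p.1 * p.2))
              (s := Phi)
            simp only [id_eq] at hcomp
            rw [hcomp]
            exact Finset.sum_congr rfl fun k _ => by rw [hMk k]
          have hKiff : ∀ k : ℤ, k ∈ K ↔ countN D D (ee k 0) ≠ 0 := by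
            intro k
            rw [hKdef, ← hMk k]
            constructor
            · intro hk
              obtain ⟨p, hp, hpk⟩ := Finset.mem_image.mp hk
              exact Finset.card_ne_zero_of_mem (Finset.mem_filter.mpr ⟨hp, hpk⟩)
            · intro h
              obtain ⟨p, hp⟩ := Finset.card_pos.mp (Nat.pos_of_ne_zero h)
              rw [Finset.mem_filter] at hp
              exact Finset.mem_image.mpr ⟨p, hp.1, hp.2⟩
          have hKneg : ∀ k ∈ K, -k ∈ K := fun k hk =>
            (hKiff _).mpr (by rw [← hMsym k]; exact (hKiff k).mp hk)
          have hKimg : K.image (fun k => -k) = K := by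
            apply Finset.Subset.antisymm
            · intro y hy
              obtain ⟨k, hk, rfl⟩ := Finset.mem_image.mp hy
              exact hKneg k hk
            · intro k hk
              exact Finset.mem_image.mpr ⟨-k, hKneg k hk, by ring⟩
          have hTneg : T = -T := by
            calc T = ∑ k ∈ K, countN D D (ee k 0) • k := hTK
            _ = ∑ k ∈ K.image (fun k => -k), countN D D (ee k 0) • k := by rw [hKimg]
            _ = ∑ k ∈ K, countN D D (ee (-k) 0) • (-k) := by
                  rw [Finset.sum_image (fun a _ b _ h => by omega)]
            _ = ∑ k ∈ K, -(countN D D (ee k 0) • k) := by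
                  refine Finset.sum_congr rfl fun k _ => ?_
                  rw [← hMsym k, smul_neg]
            _ = -T := by rw [Finset.sum_neg_distrib, ← hTK]
          have hT0 : T = 0 := by omega
          have hsum4 : ∀ f : Z2 → ℤ, ∑ z ∈ D, f z
              = f (ee 0 1) + f (ee s 1) + f (ee t (-1)) + f (ee (t+W) (-1)) := by
            intro f
            rw [hDeq]
            rw [Finset.sum_insert (by
                  simp only [Finset.mem_insert, Finset.mem_singleton, ee_eq_iff]; omega),
              Finset.sum_insert (by
                  simp only [Finset.mem_insert, Finset.mem_singleton, ee_eq_iff]; omega),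
              Finset.sum_insert (by
                  simp only [Finset.mem_singleton, ee_eq_iff]; omega),
              Finset.sum_singleton]
            ring
          have hTval : T = 8*t + 4*W + 4*s := by
            rw [hT, hPhi, Finset.sum_filter, Finset.sum_product]
            rw [hsum4 (fun x => ∑ y ∈ D, if snd2 (x * y) = 0 then fst2 (x * y) else 0)]
            rw [hsum4, hsum4, hsum4, hsum4]
            simp only [ee_mul, snd2_ee, fst2_ee]
            norm_num
            ring
          rw [hTval] at hT0
          omega
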